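/- arXiv:2003.06897 — 4 statements merged into one kernel-verified Lean document; each statement's English description precedes it below -/
import Mathlib

section
/- Let R be a right Noetherian ring, X a subcategory of mod-R closed under finite direct sums and direct summands, and suppose every module M in mod-R has finite X-dimension. Then every finitely presented functor F in mod-X has finite projective dimension in the abelian category mod-X. -/
/-! **Statement 7.** Let `R` be a right Noetherian ring, `X` a contravariantly
finite subcategory of `mod-R` containing the projectives, closed under finite
direct sums and direct summands, and suppose every module `M` in `mod-R` has
finite `X`-dimension.  Then every finitely presented functor `F` in `mod-X` has
finite projective dimension in `mod-X` (it admits a finite projective resolution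
by representable functors).

Right `R`-modules are `Rᵐᵒᵖ`-modules.  `X` is a predicate `P` on
`ModuleCat Rᵐᵒᵖ` consisting of finitely generated modules; exactness of
sequences of functors to `Ab` is pointwise and elementwise. -/

open CategoryTheory CategoryTheory.Limits

noncomputable section

variable (R : Type) [Ring R] (P : ModuleCat.{0} Rᵐᵒᵖ → Prop)

/-- The restricted Yoneda functor `Hom_R(−, X)|_X`. -/
def yonP (X : ObjectProperty.FullSubcategory P) :
    (ObjectProperty.FullSubcategory P)ᵒᵖ ⥤ AddCommGrpCat.{0} :=
  (ObjectProperty.ι P).op ⋙ preadditiveYoneda.obj X.obj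

/-- A functor `F : Xᵒᵖ → Ab` is finitely presented if it admits a presentation
`Hom(−,X₁) → Hom(−,X₀) → F → 0` by representable functors. -/
def FinPres (F : (ObjectProperty.FullSubcategory P)ᵒᵖ ⥤ AddCommGrpCat.{0}) : Prop :=
  ∃ (X₁ X₀ : ObjectProperty.FullSubcategory P) (α : yonP R P X₁ ⟶ yonP R P X₀)
    (π : yonP R P X₀ ⟶ F) (w : α ≫ π = 0),
    Nonempty (IsColimit (CokernelCofork.ofπ π w))

/-- Auxiliary: the restricted Yoneda embedding on morphisms. -/
def yonMap {X Y : ObjectProperty.FullSubcategory P} (g : X.obj ⟶ Y.obj) : yonP R P X ⟶ yonP R P Y :=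
  Functor.whiskerLeft (ObjectProperty.ι P).op (preadditiveYoneda.map g)

lemma yon_naturality {X Y : ObjectProperty.FullSubcategory P} (α : yonP R P X ⟶ yonP R P Y)
    (A : ObjectProperty.FullSubcategory P) (g : A.obj ⟶ X.obj) :
    α.app (Opposite.op A) g
      = g ≫ (α.app (Opposite.op X) (𝟙 X.obj) : X.obj ⟶ Y.obj) := by
  have h2 := NatTrans.naturality_apply α (Quiver.Hom.op (X := A) (Y := X) (ObjectProperty.homMk g)) (𝟙 X.obj)
  have e1 : ((yonP R P X).map (Quiver.Hom.op (X := A) (Y := X) (ObjectProperty.homMk g))) (𝟙 X.obj) = g :=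
    Category.comp_id g
  rw [e1] at h2
  exact h2

theorem finPres_functors_have_finite_projective_dimension
    (hR : IsNoetherianRing Rᵐᵒᵖ)
    (hfg : ∀ M, P M → Module.Finite Rᵐᵒᵖ M)
    (hprj : ∀ M : ModuleCat.{0} Rᵐᵒᵖ, Module.Finite Rᵐᵒᵖ M →
      Module.Projective Rᵐᵒᵖ M → P M)
    (hsum : ∀ M N, P M → P N → P (ModuleCat.of Rᵐᵒᵖ (M × N)))
    (hsummand : ∀ M, P M → ∀ N : ModuleCat.{0} Rᵐᵒᵖ,
      (∃ (i : N ⟶ M) (p : M ⟶ N), i ≫ p = 𝟙 N) → P N)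
    (hcf : ∀ M : ModuleCat.{0} Rᵐᵒᵖ, Module.Finite Rᵐᵒᵖ M →
      ∃ C, P C ∧ ∃ g : C ⟶ M, ∀ C', P C' → ∀ h : C' ⟶ M, ∃ f : C' ⟶ C, f ≫ g = h)
    -- every finitely generated module has finite `X`-dimension:
    (hdim : ∀ M : ModuleCat.{0} Rᵐᵒᵖ, Module.Finite Rᵐᵒᵖ M →
      ∃ (n : ℕ) (Xs : ℕ → ModuleCat.{0} Rᵐᵒᵖ)
        (d : ∀ i, Xs (i + 1) ⟶ Xs i) (ε : Xs 0 ⟶ M),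
        (∀ i ≤ n, P (Xs i)) ∧ (∀ i, n < i → Subsingleton (Xs i)) ∧
        -- exactness of `0 → X_n → ⋯ → X_0 → M → 0` ...
        Function.Surjective ε ∧
        LinearMap.range ((d 0).hom : Xs 1 →ₗ[Rᵐᵒᵖ] Xs 0) = LinearMap.ker (ε.hom : Xs 0 →ₗ[Rᵐᵒᵖ] M) ∧
        (∀ i, LinearMap.range ((d (i + 1)).hom : Xs (i + 2) →ₗ[Rᵐᵒᵖ] Xs (i + 1)) =
          LinearMap.ker ((d i).hom : Xs (i + 1) →ₗ[Rᵐᵒᵖ] Xs i)) ∧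
        -- ... which remains exact under `Hom_R(Z, −)` for every `Z ∈ X`:
        (∀ Z : ModuleCat.{0} Rᵐᵒᵖ, P Z →
          (∀ h : Z ⟶ M, ∃ g : Z ⟶ Xs 0, g ≫ ε = h) ∧
          (∀ g : Z ⟶ Xs 0, g ≫ ε = 0 → ∃ g' : Z ⟶ Xs 1, g' ≫ d 0 = g) ∧
          (∀ i (g : Z ⟶ Xs (i + 1)), g ≫ d i = 0 →
            ∃ g' : Z ⟶ Xs (i + 2), g' ≫ d (i + 1) = g))) :
    -- then every `F` in `mod-X` has finite projective dimension in `mod-X`: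
    ∀ F : (ObjectProperty.FullSubcategory P)ᵒᵖ ⥤ AddCommGrpCat.{0}, FinPres R P F →
      ∃ (m : ℕ) (Ys : ℕ → ObjectProperty.FullSubcategory P)
        (δ : ∀ i, yonP R P (Ys (i + 1)) ⟶ yonP R P (Ys i))
        (π : yonP R P (Ys 0) ⟶ F),
        (∀ i, m < i → ∀ A : ObjectProperty.FullSubcategory P,
          Subsingleton ((yonP R P (Ys i)).obj (Opposite.op A))) ∧
        (∀ A : ObjectProperty.FullSubcategory P, Function.Surjective (π.app (Opposite.op A))) ∧
        (∀ (A : ObjectProperty.FullSubcategory P) (x : (yonP R P (Ys 0)).obj (Opposite.op A)),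
          π.app (Opposite.op A) x = 0 ↔ ∃ y, (δ 0).app (Opposite.op A) y = x) ∧
        (∀ i (A : ObjectProperty.FullSubcategory P)
          (x : (yonP R P (Ys (i + 1))).obj (Opposite.op A)),
          (δ i).app (Opposite.op A) x = 0 ↔
            ∃ y, (δ (i + 1)).app (Opposite.op A) y = x) := by
  rintro F ⟨X₁, X₀, α, π, w, ⟨hc⟩⟩
  -- pointwise cokernel facts
  have key : ∀ A : ObjectProperty.FullSubcategory P,
      Function.Surjective (π.app (Opposite.op A)) ∧
      ∀ x, π.app (Opposite.op A) x = 0 → ∃ y, α.app (Opposite.op A) y = x := by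
    intro A
    have hc' := isColimitCoforkMapOfIsColimit'
      ((evaluation (ObjectProperty.FullSubcategory P)ᵒᵖ AddCommGrpCat.{0}).obj (Opposite.op A)) w hc
    constructor
    · have he : Epi (π.app (Opposite.op A)) := epi_of_isColimit_cofork hc'
      exact (AddCommGrpCat.epi_iff_surjective _).mp he
    · intro x hx
      let S : ShortComplex AddCommGrpCat.{0} :=
        { f := α.app (Opposite.op A), g := π.app (Opposite.op A),
          zero := by rw [← NatTrans.comp_app, w]; rfl }
      have hS : S.Exact := S.exact_of_g_is_cokernel hc'
      exact S.ab_exact_iff.mp hS x hx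
  -- the morphism corresponding to α under Yoneda
  let f : X₁.obj ⟶ X₀.obj := α.app (Opposite.op X₁) (𝟙 X₁.obj)
  have hα : ∀ (A : ObjectProperty.FullSubcategory P) (g : A.obj ⟶ X₁.obj),
      α.app (Opposite.op A) g = g ≫ f := fun A g => yon_naturality R P α A g
  -- the kernel of f
  let K : Submodule Rᵐᵒᵖ X₁.obj := LinearMap.ker f.hom
  haveI hX₁fin : Module.Finite Rᵐᵒᵖ X₁.obj := hfg _ X₁.property
  haveI : IsNoetherian Rᵐᵒᵖ X₁.obj := isNoetherian_of_isNoetherianRing_of_finite _ _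
  haveI hMfin : Module.Finite Rᵐᵒᵖ (ModuleCat.of Rᵐᵒᵖ K) :=
    Module.Finite.iff_fg.mpr (IsNoetherian.noetherian K)
  obtain ⟨n, Xs, d, ε, hPX, hss, hεsurj, hrk0, hrk, hhom⟩ :=
    hdim (ModuleCat.of Rᵐᵒᵖ K) hMfin
  let ι : ModuleCat.of Rᵐᵒᵖ K ⟶ X₁.obj := ModuleCat.ofHom K.subtype
  have hPall : ∀ i, P (Xs i) := by
    intro i
    rcases le_or_gt i n with h | h
    · exact hPX i h
    · haveI := hss i h
      exact hprj _ inferInstance ⟨⟨0, fun m => Subsingleton.elim _ _⟩⟩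
  let Ys : ℕ → ObjectProperty.FullSubcategory P := fun i =>
    match i with
    | 0 => X₀
    | 1 => X₁
    | (j + 2) => ⟨Xs j, hPall j⟩
  let δ : ∀ i, yonP R P (Ys (i + 1)) ⟶ yonP R P (Ys i) := fun i =>
    match i with
    | 0 => α
    | 1 => yonMap R P (ε ≫ ι)
    | (j + 2) => yonMap R P (d j)
  refine ⟨n + 2, Ys, δ, π, ?_, fun A => (key A).1, ?_, ?_⟩
  · -- eventually zero
    intro i hi A
    obtain ⟨j, rfl⟩ : ∃ j, i = j + 2 := ⟨i - 2, by omega⟩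
    haveI := hss j (by omega)
    constructor
    intro a b
    refine ModuleCat.hom_ext (LinearMap.ext fun x => ?_)
    exact Subsingleton.elim _ _
  · -- exactness at π
    intro A x
    constructor
    · intro hx
      exact (key A).2 x hx
    · rintro ⟨y, rfl⟩
      have h1 := ConcreteCategory.congr_hom (NatTrans.congr_app w (Opposite.op A)) y
      exact h1
  · -- exactness at δ
    intro i
    rcases i with _ | (_ | j) <;> intro A x
    · -- i = 0
      let x' : A.obj ⟶ X₁.obj := x
      constructor
      · intro hx
        have hxf : x' ≫ f = 0 := by
          rw [← hα A x']; exact hx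
        have hmem : ∀ a : A.obj, x' a ∈ K := by
          intro a
          have h2 := ConcreteCategory.congr_hom hxf a
          exact LinearMap.mem_ker.mpr h2
        let xK : A.obj ⟶ ModuleCat.of Rᵐᵒᵖ K :=
          ModuleCat.ofHom (LinearMap.codRestrict K x'.hom hmem)
        obtain ⟨g, hg⟩ := (hhom A.obj A.property).1 xK
        refine ⟨g, ?_⟩
        show (g ≫ (ε ≫ ι)) = x'
        refine ModuleCat.hom_ext (LinearMap.ext fun a => ?_)
        have h1 : ε (g a) = xK a := ConcreteCategory.congr_hom hg a
        show ι (ε (g a)) = x' a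
        rw [h1]
        rfl
      · rintro ⟨y, rfl⟩
        let y' : A.obj ⟶ Xs 0 := y
        show α.app (Opposite.op A) (y' ≫ (ε ≫ ι)) = 0
        rw [hα]
        refine ModuleCat.hom_ext (LinearMap.ext fun a => ?_)
        exact LinearMap.mem_ker.mp (ε (y' a)).2
    · -- i = 1
      let x' : A.obj ⟶ Xs 0 := x
      constructor
      · intro hx
        have hx' : x' ≫ ε = 0 := by
          refine ModuleCat.hom_ext (LinearMap.ext fun a => ?_)
          have h1 : ι (ε (x' a)) = 0 := ConcreteCategory.congr_hom (show x' ≫ (ε ≫ ι) = 0 from hx) a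
          exact Subtype.ext h1
        obtain ⟨g', hg'⟩ := (hhom A.obj A.property).2.1 x' hx'
        exact ⟨g', hg'⟩
      · rintro ⟨y, rfl⟩
        let y' : A.obj ⟶ Xs 1 := y
        show ((y' ≫ d 0) ≫ (ε ≫ ι) : A.obj ⟶ X₁.obj) = 0
        refine ModuleCat.hom_ext (LinearMap.ext fun a => ?_)
        have h1 : d 0 (y' a) ∈ LinearMap.ker ε.hom := by
          rw [← hrk0]
          exact ⟨y' a, rfl⟩
        show ι (ε (d 0 (y' a))) = 0
        rw [LinearMap.mem_ker.mp h1]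
        exact map_zero _
    · -- i = j + 2
      let x' : A.obj ⟶ Xs (j + 1) := x
      constructor
      · intro hx
        exact (hhom A.obj A.property).2.2 j x' hx
      · rintro ⟨y, rfl⟩
        let y' : A.obj ⟶ Xs (j + 2) := y
        show ((y' ≫ d (j + 1)) ≫ d j : A.obj ⟶ Xs j) = 0
        refine ModuleCat.hom_ext (LinearMap.ext fun a => ?_)
        have h1 : d (j + 1) (y' a) ∈ LinearMap.ker (d j).hom := by
          rw [← hrk j]
          exact ⟨y' a, rfl⟩
        exact LinearMap.mem_ker.mp h1


end
end

section
/- Let Q be a finite acyclic quiver, R a ring, and X a representation of Q over mod-R. Then there is a short exact sequence 0 → ⊕_{a ∈ Q₁} e^{t(a)}_λ(X_{s(a)}) → ⊕_{v ∈ Q₀} e^v_λ(X_v) → X → 0 in rep(Q, R), where the map to X is the family (f^v_X) corresponding to the identity of X_v under the adjunction Hom(e^v_λ(X_v), X) ≅ Hom_R(X_v, X_v). -/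
/-! **Statement 9.** Let `Q` be a finite acyclic quiver, `R` a ring, and `X` a
representation of `Q` over `mod-R`.  Then there is a short exact sequence
`0 → ⊕_{a ∈ Q₁} e^{t(a)}_λ(X_{s(a)}) → ⊕_{v ∈ Q₀} e^v_λ(X_v) → X → 0`
in `rep(Q, R)`, where the map to `X` is the family `(f^v_X)` corresponding to
the identity of `X_v` under the adjunction.

Representations are given concretely (right `R`-modules = `Rᵐᵒᵖ`-modules at each
vertex, linear maps for arrows); `e^v_λ(M)` has at `w` the direct sum
`⊕_{p ∈ Q(v,w)} M = (Path v w) →₀ M`; exactness is vertexwise. -/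

open scoped DirectSum Classical

noncomputable section

variable (A V : Type) [Ring A] [Quiver.{0} V]

/-- A representation of the quiver `V` by `A`-modules. -/
structure QRep where
  M : V → Type
  [acg : ∀ v, AddCommGroup (M v)]
  [mod : ∀ v, Module A (M v)]
  act : ∀ {a b : V}, (a ⟶ b) → (M a →ₗ[A] M b)

attribute [instance] QRep.acg QRep.mod

variable {A V}

/-- A morphism of representations. -/
structure QHom (D E : QRep A V) where
  app : ∀ v, D.M v →ₗ[A] E.M v
  natural : ∀ {a b : V} (e : a ⟶ b), (E.act e).comp (app a) = (app b).comp (D.act e)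

/-- The action of a path on a representation, by composing the actions of its
arrows. -/
def QRep.pact (D : QRep A V) : ∀ {a b : V}, Quiver.Path a b → (D.M a →ₗ[A] D.M b)
  | _, _, Quiver.Path.nil => LinearMap.id
  | _, _, Quiver.Path.cons p e => (D.act e).comp (D.pact p)

/-- The arrows of the quiver, as a sigma type. -/
abbrev Arr (V : Type) [Quiver.{0} V] : Type := Σ a b : V, a ⟶ b

/-- The middle term `⊕_{v ∈ Q₀} e^v_λ(X_v)` of the canonical sequence. -/
def midRep (X : QRep A V) : QRep A V where
  M := fun w => ⨁ (u : V), (Quiver.Path u w →₀ X.M u)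
  act := fun e => DirectSum.toModule A V _ fun u =>
    (DirectSum.lof A V (fun u' => Quiver.Path u' _ →₀ X.M u') u).comp
      (Finsupp.lmapDomain (X.M u) A (fun p => p.comp e.toPath))

/-- The left term `⊕_{a ∈ Q₁} e^{t(a)}_λ(X_{s(a)})` of the canonical
sequence. -/
def leftRep (X : QRep A V) : QRep A V where
  M := fun w => ⨁ (c : Arr V), (Quiver.Path c.2.1 w →₀ X.M c.1)
  act := fun e => DirectSum.toModule A (Arr V) _ fun c =>
    (DirectSum.lof A (Arr V) (fun c' => Quiver.Path c'.2.1 _ →₀ X.M c'.1) c).comp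
      (Finsupp.lmapDomain (X.M c.1) A (fun p => p.comp e.toPath))

/-- The canonical morphism `f_X : ⊕_{v ∈ Q₀} e^v_λ(X_v) → X`, whose `v`-th
component corresponds to the identity of `X_v` under the adjunction
`Hom(e^v_λ(X_v), X) ≅ Hom_R(X_v, X_v)`: on the path component `p : Q(u,w)` it
acts by `X.pact p`. -/
def canonicalEpi (X : QRep A V) (w : V) : (midRep X).M w →ₗ[A] X.M w :=
  DirectSum.toModule A V (X.M w) fun u =>
    Finsupp.lsum ℕ fun p : Quiver.Path u w => X.pact p


section Aux

variable (X : QRep A V)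

lemma pact_comp {a b c : V} (p : Quiver.Path a b) (q : Quiver.Path b c) :
    X.pact (p.comp q) = (X.pact q).comp (X.pact p) := by
  induction q with
  | nil => simp [QRep.pact]
  | cons q e ih => ext x; simp [QRep.pact, Quiver.Path.comp_cons, ih]

lemma pact_toPath_comp {a b c : V} (e : a ⟶ b) (q : Quiver.Path b c) (m : X.M a) :
    X.pact (e.toPath.comp q) m = X.pact q (X.act e m) := by
  rw [pact_comp]
  simp [QRep.pact, Quiver.Hom.toPath]

lemma comp_toPath_eq_cons {u v w : V} (p : Quiver.Path u v) (e : v ⟶ w) :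
    p.comp e.toPath = p.cons e := rfl

lemma midRep_act_single {a b : V} (e : a ⟶ b) (u : V) (p : Quiver.Path u a) (m : X.M u) :
    (midRep X).act e
        (DirectSum.lof A V (fun u' => Quiver.Path u' a →₀ X.M u') u (Finsupp.single p m)) =
      DirectSum.lof A V (fun u' => Quiver.Path u' b →₀ X.M u') u
        (Finsupp.single (p.comp e.toPath) m) := by
  dsimp only [midRep]
  show DirectSum.toModule A V _ _ _ = _
  rw [DirectSum.toModule_lof]
  show DirectSum.lof A V (fun u' => Quiver.Path u' b →₀ X.M u') u
      (Finsupp.mapDomain (fun p' : Quiver.Path u a => p'.comp e.toPath)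
        (Finsupp.single p m)) = _
  rw [Finsupp.mapDomain_single]

lemma leftRep_act_single {a b : V} (e : a ⟶ b) (c : Arr V) (p : Quiver.Path c.2.1 a)
    (m : X.M c.1) :
    (leftRep X).act e
        (DirectSum.lof A (Arr V) (fun c' => Quiver.Path c'.2.1 a →₀ X.M c'.1) c
          (Finsupp.single p m)) =
      DirectSum.lof A (Arr V) (fun c' => Quiver.Path c'.2.1 b →₀ X.M c'.1) c
        (Finsupp.single (p.comp e.toPath) m) := by
  dsimp only [leftRep]
  show DirectSum.toModule A (Arr V) _ _ _ = _
  rw [DirectSum.toModule_lof]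
  show DirectSum.lof A (Arr V) (fun c' => Quiver.Path c'.2.1 b →₀ X.M c'.1) c
      (Finsupp.mapDomain (fun p' : Quiver.Path c.2.1 a => p'.comp e.toPath)
        (Finsupp.single p m)) = _
  rw [Finsupp.mapDomain_single]

lemma canonicalEpi_single (u w : V) (p : Quiver.Path u w) (m : X.M u) :
    canonicalEpi X w
        (DirectSum.lof A V (fun u' => Quiver.Path u' w →₀ X.M u') u (Finsupp.single p m)) =
      X.pact p m := by
  dsimp only [canonicalEpi, midRep]
  show DirectSum.toModule A V _ _ _ = _
  rw [DirectSum.toModule_lof, Finsupp.lsum_single]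

/-- The canonical injection `g`, vertexwise. -/
def gApp (X : QRep A V) (w : V) : (leftRep X).M w →ₗ[A] (midRep X).M w :=
  DirectSum.toModule A (Arr V) _ fun c =>
    Finsupp.lsum ℕ fun p : Quiver.Path c.2.1 w =>
      (DirectSum.lof A V (fun u => Quiver.Path u w →₀ X.M u) c.1).comp
          (Finsupp.lsingle (c.2.2.toPath.comp p)) -
        (DirectSum.lof A V (fun u => Quiver.Path u w →₀ X.M u) c.2.1).comp
          ((Finsupp.lsingle p).comp (X.act c.2.2))

lemma gApp_single (c : Arr V) {w : V} (p : Quiver.Path c.2.1 w) (m : X.M c.1) :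
    gApp X w
        (DirectSum.lof A (Arr V) (fun c' => Quiver.Path c'.2.1 w →₀ X.M c'.1) c
          (Finsupp.single p m)) =
      DirectSum.lof A V (fun u => Quiver.Path u w →₀ X.M u) c.1
          (Finsupp.single (c.2.2.toPath.comp p) m) -
        DirectSum.lof A V (fun u => Quiver.Path u w →₀ X.M u) c.2.1
          (Finsupp.single p (X.act c.2.2 m)) := by
  show DirectSum.toModule A (Arr V) _ _ _ = _
  erw [DirectSum.toModule_lof, Finsupp.lsum_single]
  rfl

/-- The retraction of `g`, on each path component. -/
def sig (X : QRep A V) :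
    ∀ {u w : V}, Quiver.Path u w →
      (X.M u →ₗ[A] ⨁ (c : Arr V), (Quiver.Path c.2.1 w →₀ X.M c.1))
  | _, _, Quiver.Path.nil => 0
  | _, _, @Quiver.Path.cons _ _ _ v w q e =>
    (show (⨁ (c : Arr V), (Quiver.Path c.2.1 v →₀ X.M c.1)) →ₗ[A]
        ⨁ (c : Arr V), (Quiver.Path c.2.1 w →₀ X.M c.1) from (leftRep X).act e).comp
      (sig X q) +
      (DirectSum.lof A (Arr V) (fun c => Quiver.Path c.2.1 w →₀ X.M c.1) ⟨v, w, e⟩).comp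
        ((Finsupp.lsingle Quiver.Path.nil).comp (X.pact q))

lemma sig_cons {u v w : V} (q : Quiver.Path u v) (e : v ⟶ w) (m : X.M u) :
    sig X (q.cons e) m =
      (show ⨁ (c : Arr V), (Quiver.Path c.2.1 w →₀ X.M c.1) from
          (leftRep X).act e (sig X q m)) +
        DirectSum.lof A (Arr V) (fun c => Quiver.Path c.2.1 w →₀ X.M c.1) ⟨v, w, e⟩
          (Finsupp.single Quiver.Path.nil (X.pact q m)) := by
  simp [sig]
  rfl

lemma sig_nil {u : V} (m : X.M u) : sig X (Quiver.Path.nil : Quiver.Path u u) m = 0 := by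
  have h : sig X (Quiver.Path.nil : Quiver.Path u u) = 0 := by simp [sig]
  rw [h]
  simp

def sigApp (X : QRep A V) (w : V) : (midRep X).M w →ₗ[A] (leftRep X).M w :=
  DirectSum.toModule A V _ fun u => Finsupp.lsum ℕ fun p : Quiver.Path u w => sig X p

lemma sigApp_single (u w : V) (p : Quiver.Path u w) (m : X.M u) :
    sigApp X w
        (DirectSum.lof A V (fun u' => Quiver.Path u' w →₀ X.M u') u (Finsupp.single p m)) =
      sig X p m := by
  show DirectSum.toModule A V _ _ _ = _
  erw [DirectSum.toModule_lof, Finsupp.lsum_single]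
  rfl

lemma sig_toPath_comp {a b w : V} (e : a ⟶ b) (p : Quiver.Path b w) (m : X.M a) :
    sig X (e.toPath.comp p) m =
      DirectSum.lof A (Arr V) (fun c => Quiver.Path c.2.1 w →₀ X.M c.1) ⟨a, b, e⟩
          (Finsupp.single p m) +
        sig X p (X.act e m) := by
  induction p with
  | nil =>
    rw [Quiver.Path.comp_nil]
    show sig X (Quiver.Path.nil.cons e) m = _
    rw [sig_cons, sig_nil, sig_nil]
    dsimp only
    simp [QRep.pact]
    erw [map_zero, zero_add]
  | cons q f ih =>
    rw [Quiver.Path.comp_cons, sig_cons, ih, pact_toPath_comp]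
    dsimp only
    erw [map_add, leftRep_act_single]
    rw [sig_cons, comp_toPath_eq_cons]
    dsimp only
    abel
/-- `σ ∘ g = id`. -/
lemma sig_g (w : V) : (sigApp X w).comp (gApp X w) = LinearMap.id := by
  refine DirectSum.linearMap_ext _ fun c => Finsupp.lhom_ext fun p m => ?_
  obtain ⟨a, b, e⟩ := c
  have h1 : sigApp X w (gApp X w
      (DirectSum.lof A (Arr V) (fun c' => Quiver.Path c'.2.1 w →₀ X.M c'.1) ⟨a, b, e⟩
        (Finsupp.single p m))) =
      DirectSum.lof A (Arr V) (fun c' => Quiver.Path c'.2.1 w →₀ X.M c'.1) ⟨a, b, e⟩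
        (Finsupp.single p m) := by
    erw [gApp_single, map_sub, sigApp_single, sigApp_single]
    dsimp only
    rw [sig_toPath_comp]
    abel
  exact h1

/-- naturality of `g`. -/
lemma g_natural {a b : V} (e : a ⟶ b) :
    ((midRep X).act e).comp (gApp X a) = (gApp X b).comp ((leftRep X).act e) := by
  refine DirectSum.linearMap_ext _ fun c => Finsupp.lhom_ext fun p m => ?_
  obtain ⟨a', b', e'⟩ := c
  have h1 : (midRep X).act e (gApp X a
      (DirectSum.lof A (Arr V) (fun c' => Quiver.Path c'.2.1 a →₀ X.M c'.1) ⟨a', b', e'⟩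
        (Finsupp.single p m))) =
      gApp X b ((leftRep X).act e
        (DirectSum.lof A (Arr V) (fun c' => Quiver.Path c'.2.1 a →₀ X.M c'.1) ⟨a', b', e'⟩
          (Finsupp.single p m))) := by
    erw [gApp_single, map_sub, midRep_act_single, midRep_act_single]
    rw [leftRep_act_single,
      gApp_single, Quiver.Path.comp_assoc]
    rfl
  exact h1

/-- naturality of the epimorphism. -/
lemma epi_natural {a b : V} (e : a ⟶ b) :
    (X.act e).comp (canonicalEpi X a) = (canonicalEpi X b).comp ((midRep X).act e) := by
  refine DirectSum.linearMap_ext _ fun u => Finsupp.lhom_ext fun p m => ?_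
  have h1 : X.act e (canonicalEpi X a
      (DirectSum.lof A V (fun u' => Quiver.Path u' a →₀ X.M u') u (Finsupp.single p m))) =
      canonicalEpi X b ((midRep X).act e
        (DirectSum.lof A V (fun u' => Quiver.Path u' a →₀ X.M u') u (Finsupp.single p m))) := by
    rw [canonicalEpi_single, midRep_act_single, canonicalEpi_single, pact_comp]
    simp [QRep.pact, Quiver.Hom.toPath]
  exact h1

/-- the nil-path section of the epimorphism. -/
def nilSec (X : QRep A V) (w : V) : X.M w →ₗ[A] (midRep X).M w :=
  (DirectSum.lof A V (fun u => Quiver.Path u w →₀ X.M u) w).comp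
    (Finsupp.lsingle Quiver.Path.nil)

lemma nilSec_apply (w : V) (m : X.M w) :
    nilSec X w m =
      DirectSum.lof A V (fun u => Quiver.Path u w →₀ X.M u) w
        (Finsupp.single Quiver.Path.nil m) := by
  show (DirectSum.lof A V (fun u => Quiver.Path u w →₀ X.M u) w)
      ((Finsupp.lsingle Quiver.Path.nil) m) = _
  rw [Finsupp.lsingle_apply]

/-- `g ∘ σ = id - nilSec ∘ ε`. -/
lemma g_sig (w : V) :
    (gApp X w).comp (sigApp X w) =
      LinearMap.id - (nilSec X w).comp (canonicalEpi X w) := by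
  refine DirectSum.linearMap_ext _ fun u => Finsupp.lhom_ext fun p m => ?_
  have h1 : gApp X w (sigApp X w
      (DirectSum.lof A V (fun u' => Quiver.Path u' w →₀ X.M u') u (Finsupp.single p m))) =
      (LinearMap.id : (midRep X).M w →ₗ[A] (midRep X).M w)
          (DirectSum.lof A V (fun u' => Quiver.Path u' w →₀ X.M u') u (Finsupp.single p m)) -
        nilSec X w (canonicalEpi X w
          (DirectSum.lof A V (fun u' => Quiver.Path u' w →₀ X.M u') u (Finsupp.single p m))) := by
    show _ = (DirectSum.lof A V (fun u' => Quiver.Path u' w →₀ X.M u') u (Finsupp.single p m) :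
      (midRep X).M w) - _
    erw [sigApp_single, canonicalEpi_single, nilSec_apply]
    induction p with
    | nil =>
      erw [sig_nil, map_zero]
      have h2 : X.pact (Quiver.Path.nil : Quiver.Path u u) m = m := by simp [QRep.pact]
      rw [h2, sub_self]
      rfl
    | cons q f ih =>
      rw [sig_cons]
      dsimp only
      erw [map_add]
      erw [← LinearMap.comp_apply (gApp X _) ((leftRep X).act f), ← g_natural,
        LinearMap.comp_apply, ih, gApp_single]
      erw [map_sub, midRep_act_single, midRep_act_single]
      have h3 : X.pact (q.cons f) m = X.act f (X.pact q m) := by simp [QRep.pact]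
      rw [h3]
      simp only [Quiver.Path.comp_nil, Quiver.Path.nil_comp, comp_toPath_eq_cons,
        Quiver.Hom.toPath]
      rw [show q.comp (Quiver.Path.nil.cons f) = q.cons f from rfl]
      abel
  exact h1
end Aux

theorem canonical_short_exact_sequence
    [Fintype V] [∀ a b : V, Fintype (a ⟶ b)]
    (hacyclic : ∀ (v : V) (p : Quiver.Path v v), p = Quiver.Path.nil)
    (X : QRep A V) :
    -- `f_X` is a morphism of representations ...
    (∀ {a b : V} (e : a ⟶ b),
      (X.act e).comp (canonicalEpi X a) = (canonicalEpi X b).comp ((midRep X).act e)) ∧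
    -- ... and there is an injection from `⊕_{a ∈ Q₁} e^{t(a)}_λ(X_{s(a)})`
    -- completing it to a vertexwise short exact sequence.
    (∃ g : QHom (leftRep X) (midRep X),
      (∀ w, Function.Injective (g.app w)) ∧
      (∀ w, Function.Surjective (canonicalEpi X w)) ∧
      (∀ w, LinearMap.range (g.app w) = LinearMap.ker (canonicalEpi X w))) := by
  constructor
  · intro a b e
    exact epi_natural X e
  · refine ⟨⟨fun w => gApp X w, fun {a b} e => g_natural X e⟩, fun w => ?_, fun w => ?_,
      fun w => ?_⟩
    · intro x y hxy
      have hx : sigApp X w (gApp X w x) = x := LinearMap.congr_fun (sig_g X w) x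
      have hy : sigApp X w (gApp X w y) = y := LinearMap.congr_fun (sig_g X w) y
      rw [← hx, ← hy, hxy]
    · intro m
      refine ⟨DirectSum.lof A V (fun u => Quiver.Path u w →₀ X.M u) w
        (Finsupp.single Quiver.Path.nil m), ?_⟩
      rw [canonicalEpi_single]
      simp [QRep.pact]
    · have hcomp : (canonicalEpi X w).comp (gApp X w) = 0 := by
        refine DirectSum.linearMap_ext _ fun c => Finsupp.lhom_ext fun p m => ?_
        obtain ⟨a, b, e⟩ := c
        have h1 : canonicalEpi X w (gApp X w
            (DirectSum.lof A (Arr V) (fun c' => Quiver.Path c'.2.1 w →₀ X.M c'.1) ⟨a, b, e⟩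
              (Finsupp.single p m))) = 0 := by
          erw [gApp_single, map_sub, canonicalEpi_single, canonicalEpi_single,
            pact_toPath_comp, sub_self]
        exact h1
      apply le_antisymm
      · rintro _ ⟨x, rfl⟩
        show canonicalEpi X w (gApp X w x) = 0
        exact LinearMap.congr_fun hcomp x
      · intro x hx
        have hx0 : canonicalEpi X w x = 0 := hx
        have h2 : gApp X w (sigApp X w x) = x - nilSec X w (canonicalEpi X w x) :=
          LinearMap.congr_fun (g_sig X w) x
        rw [hx0, map_zero, sub_zero] at h2
        exact ⟨sigApp X w x, h2⟩

end
end

section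
/- Let T = [[R, 0], [M, S]] be a triangular matrix ring and M(T) the subcategory of mod-T of modules (X,Y)_f such that f: Y ⊗_S M → X is a split monomorphism. Then M(T) is contravariantly finite in mod-T, and every T-module (X,Y)_f admits an exact sequence 0 → K → C → (X,Y)_f → 0 with C, K ∈ M(T) that stays exact under Hom_T(Z, −) for all Z ∈ M(T); in particular the global M(T)-dimension of T is at most one. -/
/-! **Statement 13.** Let `T = [[R,0],[M,S]]` be a triangular matrix ring and
`M(T)` the subcategory of `mod-T` of modules `(X,Y)_f` such that
`f : Y ⊗_S M → X` is a split monomorphism.  Then `M(T)` is contravariantly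
finite in `mod-T`, and every `T`-module `(X,Y)_f` admits an exact sequence
`0 → K → C → (X,Y)_f → 0` with `C, K ∈ M(T)` which stays exact under
`Hom_T(Z, −)` for all `Z ∈ M(T)`; in particular the global `M(T)`-dimension of
`T` is at most one.

`T`-modules are triples `(X, Y, f)` where the tensor product `Y ⊗_S M` is
realized by a type `T` with a universal balanced bi-additive map `tp`; a
morphism is a pair of linear maps together with the induced map of realizations
commuting with the structure maps; exactness is componentwise. -/

universe u

section
variable (R S M : Type u) [Ring R] [Ring S] [AddCommGroup M]
  [Module S M] [Module Rᵐᵒᵖ M] [SMulCommClass S Rᵐᵒᵖ M]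

/-- A right `T`-module `(X, Y)_f`, together with a chosen realization `T` of
the tensor product `Y ⊗_S M`. -/
structure TMod where
  X : Type u
  [ax : AddCommGroup X]
  [mx : Module Rᵐᵒᵖ X]
  Y : Type u
  [ay : AddCommGroup Y]
  [my : Module Sᵐᵒᵖ Y]
  T : Type u
  [aT : AddCommGroup T]
  [mT : Module Rᵐᵒᵖ T]
  tp : Y → M → T
  tp_add_left : ∀ y y' m, tp (y + y') m = tp y m + tp y' m
  tp_add_right : ∀ y m m', tp y (m + m') = tp y m + tp y m'
  tp_balanced : ∀ (s : S) y m, tp (MulOpposite.op s • y) m = tp y (s • m)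
  tp_smul : ∀ (r : Rᵐᵒᵖ) y m, tp y (r • m) = r • tp y m
  tp_universal : ∀ (A : Type u) [AddCommGroup A] (h : Y → M → A),
    (∀ y y' m, h (y + y') m = h y m + h y' m) →
    (∀ y m m', h y (m + m') = h y m + h y m') →
    (∀ (s : S) y m, h (MulOpposite.op s • y) m = h y (s • m)) →
    ∃! g : T →+ A, ∀ y m, g (tp y m) = h y m
  f : T →ₗ[Rᵐᵒᵖ] X

attribute [instance] TMod.ax TMod.mx TMod.ay TMod.my TMod.aT TMod.mT

variable {R S M}

/-- A morphism of `T`-modules: a pair `(φX, φY)` with `f₂ ∘ (φY ⊗ M) = φX ∘ f₁`,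
the map `φY ⊗ M` of realizations being recorded as `φT`. -/
structure THom (N₁ N₂ : TMod R S M) where
  φX : N₁.X →ₗ[Rᵐᵒᵖ] N₂.X
  φY : N₁.Y →ₗ[Sᵐᵒᵖ] N₂.Y
  φT : N₁.T →+ N₂.T
  φT_tp : ∀ y m, φT (N₁.tp y m) = N₂.tp (φY y) m
  comm : ∀ t, φX (N₁.f t) = N₂.f (φT t)

/-- `N` belongs to `M(T)`: the structure map `f : Y ⊗_S M → X` is a split
monomorphism. -/
def MemMT (N : TMod R S M) : Prop :=
  ∃ r : N.X →ₗ[Rᵐᵒᵖ] N.T, ∀ t, r (N.f t) = t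

/-- `tp 0 m = 0`. -/
theorem TMod.tp_zero_left (N : TMod R S M) (m : M) : N.tp 0 m = 0 := by
  have h := N.tp_add_left 0 0 m
  rw [add_zero] at h
  exact (left_eq_add.mp h)

/-- The realization `T` is generated as an abelian group by the image of `tp`. -/
theorem TMod.closure_range_tp (N : TMod R S M) :
    AddSubgroup.closure {t : N.T | ∃ y m, N.tp y m = t} = ⊤ := by
  set G := AddSubgroup.closure {t : N.T | ∃ y m, N.tp y m = t} with hG
  have hmem : ∀ y m, N.tp y m ∈ G := fun y m => AddSubgroup.subset_closure ⟨y, m, rfl⟩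
  obtain ⟨g, hg, -⟩ := N.tp_universal G (fun y m => ⟨N.tp y m, hmem y m⟩)
    (fun y y' m => Subtype.ext (by simp [N.tp_add_left]))
    (fun y m m' => Subtype.ext (by simp [N.tp_add_right]))
    (fun s y m => Subtype.ext (by simp [N.tp_balanced]))
  obtain ⟨g₀, -, hu⟩ := N.tp_universal N.T N.tp N.tp_add_left N.tp_add_right N.tp_balanced
  have h1 : G.subtype.comp g = AddMonoidHom.id N.T := by
    rw [hu (G.subtype.comp g) (fun y m => by simp [hg]),
      hu (AddMonoidHom.id N.T) (fun y m => rfl)]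
  have hall : ∀ t : N.T, t ∈ G := fun t => by
    have h2 : (G.subtype.comp g) t = t := by rw [h1]; rfl
    rw [← h2]; exact (g t).2
  exact (AddSubgroup.eq_top_iff' G).mpr hall

/-- Any `THom` has `Rᵐᵒᵖ`-linear realization component. -/
theorem THom.φT_smul {N₁ N₂ : TMod R S M} (φ : THom N₁ N₂) (r : Rᵐᵒᵖ) (t : N₁.T) :
    φ.φT (r • t) = r • φ.φT t := by
  have ht : t ∈ AddSubgroup.closure {t : N₁.T | ∃ y m, N₁.tp y m = t} := by
    rw [N₁.closure_range_tp]; trivial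
  induction ht using AddSubgroup.closure_induction with
  | mem t hm =>
    obtain ⟨y, m, rfl⟩ := hm
    rw [← N₁.tp_smul, φ.φT_tp, φ.φT_tp, N₂.tp_smul]
  | zero => simp
  | add a b _ _ ha hb => rw [smul_add, map_add, ha, hb, map_add, smul_add]
  | neg a _ ha => rw [smul_neg, map_neg, ha, map_neg, smul_neg]

/-- The realization component as a linear map. -/
def THom.φTₗ {N₁ N₂ : TMod R S M} (φ : THom N₁ N₂) : N₁.T →ₗ[Rᵐᵒᵖ] N₂.T :=
  { φ.φT with map_smul' := φ.φT_smul }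

/-- If `φY = 0` then `φT = 0`. -/
theorem THom.φT_eq_zero {N₁ N₂ : TMod R S M} (φ : THom N₁ N₂)
    (h : ∀ y, φ.φY y = 0) (t : N₁.T) : φ.φT t = 0 := by
  have ht : t ∈ AddSubgroup.closure {t : N₁.T | ∃ y m, N₁.tp y m = t} :=
    by rw [N₁.closure_range_tp]; trivial
  induction ht using AddSubgroup.closure_induction with
  | mem t hm =>
    obtain ⟨y, m, rfl⟩ := hm
    rw [φ.φT_tp, h, N₂.tp_zero_left]
  | zero => simp
  | add a b _ _ ha hb => rw [map_add, ha, hb, add_zero]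
  | neg a _ ha => rw [map_neg, ha, neg_zero]

/-- The approximation `C = e¹(X) ⊕ e²(Y) = (X ⊕ (Y ⊗ M), Y)₍₀,₁₎`. -/
def TMod.approx (N : TMod R S M) : TMod R S M where
  X := N.X × N.T
  Y := N.Y
  T := N.T
  tp := N.tp
  tp_add_left := N.tp_add_left
  tp_add_right := N.tp_add_right
  tp_balanced := N.tp_balanced
  tp_smul := N.tp_smul
  tp_universal := N.tp_universal
  f := LinearMap.inr Rᵐᵒᵖ N.X N.T

/-- The kernel `K = (Y ⊗ M, 0)₀`. -/
def TMod.kermod (N : TMod R S M) : TMod R S M where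
  X := N.T
  Y := PUnit
  T := PUnit
  tp := fun _ _ => PUnit.unit
  tp_add_left := fun _ _ _ => rfl
  tp_add_right := fun _ _ _ => rfl
  tp_balanced := fun _ _ _ => rfl
  tp_smul := fun _ _ _ => rfl
  tp_universal := fun A _ h h1 _ _ => by
    refine ⟨0, fun y m => ?_, fun g _ =>
      AddMonoidHom.ext fun x => by rw [Subsingleton.elim x 0, map_zero, map_zero]⟩
    have hy : h y m = 0 := by
      have h2 := h1 y y m
      rw [show y + y = y from rfl] at h2
      exact (left_eq_add.mp h2)
    rw [hy, map_zero]
  f := 0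

theorem MT_contravariantly_finite_and_dimension_le_one
    (hR : IsNoetherianRing Rᵐᵒᵖ) (hS : IsNoetherianRing Sᵐᵒᵖ)
    (hM : Module.Finite Rᵐᵒᵖ M)
    (N : TMod R S M)
    (hNX : Module.Finite Rᵐᵒᵖ N.X) (hNY : Module.Finite Sᵐᵒᵖ N.Y) :
    ∃ (C K : TMod R S M), MemMT C ∧ MemMT K ∧
      ∃ (ι : THom K C) (π : THom C N),
        -- `0 → K → C → N → 0` is a short exact sequence (componentwise):
        Function.Injective ι.φX ∧ Function.Injective ι.φY ∧
        Function.Surjective π.φX ∧ Function.Surjective π.φY ∧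
        (∀ x : C.X, π.φX x = 0 ↔ ∃ k, ι.φX k = x) ∧
        (∀ y : C.Y, π.φY y = 0 ↔ ∃ k, ι.φY k = y) ∧
        -- `π` is a right `M(T)`-approximation: every morphism from an object
        -- of `M(T)` factors through `π` ...
        (∀ D : TMod R S M, MemMT D → ∀ h : THom D N, ∃ u : THom D C,
          (∀ x, π.φX (u.φX x) = h.φX x) ∧ (∀ y, π.φY (u.φY y) = h.φY y)) ∧
        -- ... and the sequence stays exact under `Hom_T(Z,−)` for `Z ∈ M(T)`:
        (∀ D : TMod R S M, MemMT D → ∀ u : THom D C,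
          (∀ x, π.φX (u.φX x) = 0) → (∀ y, π.φY (u.φY y) = 0) →
          ∃ w : THom D K,
            (∀ x, ι.φX (w.φX x) = u.φX x) ∧ (∀ y, ι.φY (w.φY y) = u.φY y)) := by
  classical
  refine ⟨N.approx, N.kermod, ?_, ?_, ?_⟩
  · -- C ∈ M(T): retraction is the second projection
    exact ⟨LinearMap.snd Rᵐᵒᵖ N.X N.T, fun t => rfl⟩
  · -- K ∈ M(T)
    exact ⟨0, fun t => rfl⟩
  · -- the morphisms
    refine ⟨{ φX := LinearMap.prod (-N.f) LinearMap.id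
              φY := 0
              φT := 0
              φT_tp := fun y m => by
                show (0 : N.T) = N.tp 0 m
                rw [N.tp_zero_left]
              comm := fun t => by
                show ((-N.f) (0 : N.T), (0 : N.T)) = ((0 : N.X), (0 : N.T))
                simp },
            { φX := LinearMap.fst Rᵐᵒᵖ N.X N.T + N.f.comp (LinearMap.snd Rᵐᵒᵖ N.X N.T)
              φY := LinearMap.id
              φT := AddMonoidHom.id N.T
              φT_tp := fun y m => rfl
              comm := fun t => by show (0 : N.X) + N.f t = N.f t; simp },
            ?_, ?_, ?_, ?_, ?_, ?_, ?_, ?_⟩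
    · -- ι.φX injective
      intro a b hab
      exact congrArg Prod.snd hab
    · -- ι.φY injective
      intro a b _
      exact rfl
    · -- π.φX surjective
      intro x
      refine ⟨(x, 0), ?_⟩
      show x + N.f 0 = x
      rw [map_zero, add_zero]
    · -- π.φY surjective
      exact fun y => ⟨y, rfl⟩
    · -- exactness on X
      intro x
      constructor
      · intro hx
        refine ⟨x.2, ?_⟩
        have : x.1 + N.f x.2 = 0 := hx
        have h1 : -N.f x.2 = x.1 := by linear_combination (norm := abel) - this
        exact Prod.ext h1 rfl
      · rintro ⟨k, rfl⟩
        show (-N.f k, k).1 + N.f (-N.f k, k).2 = 0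
        simp
    · -- exactness on Y
      intro y
      constructor
      · intro hy
        exact ⟨PUnit.unit, hy.symm⟩
      · rintro ⟨k, rfl⟩
        rfl
    · -- approximation property
      rintro D ⟨r, hr⟩ h
      refine ⟨{ φX := LinearMap.prod (h.φX - N.f.comp (h.φTₗ.comp r)) (h.φTₗ.comp r)
                φY := h.φY
                φT := h.φT
                φT_tp := h.φT_tp
                comm := fun t => by
                  have h1 : r (D.f t) = t := hr t
                  have h2 : h.φX (D.f t) = N.f (h.φT t) := h.comm t
                  show (h.φX (D.f t) - N.f (h.φT (r (D.f t))), h.φT (r (D.f t)))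
                    = ((0 : N.X), h.φT t)
                  rw [h1, h2, sub_self] },
              fun x => ?_, fun y => rfl⟩
      show (h.φX x - N.f (h.φT (r x))) + N.f (h.φT (r x)) = h.φX x
      abel
    · -- the sequence stays exact under Hom(D, −)
      intro D _ u hx hy
      have hY0 : ∀ y, u.φY y = 0 := fun y => hy y
      have hT0 : ∀ t, u.φT t = 0 := u.φT_eq_zero hY0
      refine ⟨{ φX := (LinearMap.snd Rᵐᵒᵖ N.X N.T).comp u.φX
                φY := 0
                φT := 0
                φT_tp := fun y m => rfl
                comm := fun t => by
                  have h2 : u.φX (D.f t) = ((0 : N.X), u.φT t) := u.comm t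
                  show (u.φX (D.f t)).2 = (0 : N.T)
                  rw [h2]
                  exact hT0 t },
              fun x => ?_, fun y => (hY0 y).symm⟩
      show (-N.f ((u.φX x).2), (u.φX x).2) = u.φX x
      have h1 : (u.φX x).1 + N.f ((u.φX x).2) = 0 := hx x
      have h2 : -N.f ((u.φX x).2) = (u.φX x).1 := by linear_combination (norm := abel) - h1
      exact Prod.ext h2 rfl

end
end

section
/- Let R be a ring and M a nilpotent R-R-bimodule. For every module (X, u) over the tensor ring T_R(M) there is a short exact sequence of T_R(M)-modules 0 → (Ind(X⊗_R M), c_{X⊗M}) → (Ind(X), c_X) → (X, u) → 0, where the surjection restricted to X⊗M^{⊗i} is u composed i times. -/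
/-! ### Auxiliary machinery (self-contained) -/

noncomputable section AuxSES

variable {R : Type} [Ring R] {M : Type} [AddCommGroup M] [Module R M] [Module Rᵐᵒᵖ M]
  (P : ℕ → Type) [∀ i, AddCommGroup (P i)] [∀ i, Module Rᵐᵒᵖ (P i)]
  (tp : ∀ i, P i → M → P (i + 1))

/-- `tp i · m` bundled as an additive monoid hom (given left additivity). -/
def tpHom (tp_add_left : ∀ i p p' m, tp i (p + p') m = tp i p m + tp i p' m)
    (i : ℕ) (m : M) : P i →+ P (i + 1) :=
  AddMonoidHom.mk' (fun p => tp i p m) (fun a b => tp_add_left i a b m)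

/-- `P (i+1)` is generated by the image of `tp i`. -/
lemma Pgen
    (tp_universal : ∀ i (A : Type) [AddCommGroup A] (h : P i → M → A),
      (∀ p p' m, h (p + p') m = h p m + h p' m) →
      (∀ p m m', h p (m + m') = h p m + h p m') →
      (∀ (r : R) p m, h (MulOpposite.op r • p) m = h p (r • m)) →
      ∃! g : P (i + 1) →+ A, ∀ p m, g (tp i p m) = h p m)
    (i : ℕ) (q : P (i + 1)) :
    q ∈ AddSubgroup.closure {x : P (i + 1) | ∃ p m, x = tp i p m} := by
  set H := AddSubgroup.closure {x : P (i + 1) | ∃ p m, x = tp i p m} with hH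
  obtain ⟨g, hg, hu⟩ := tp_universal i (P (i + 1) ⧸ H)
    (fun _ _ => (0 : P (i + 1) ⧸ H)) (by simp) (by simp) (by simp)
  have h1 : QuotientAddGroup.mk' H = g := by
    refine hu _ (fun p m => ?_)
    rw [QuotientAddGroup.mk'_apply, QuotientAddGroup.eq_zero_iff]
    exact AddSubgroup.subset_closure ⟨p, m, rfl⟩
  have h2 : (0 : P (i + 1) →+ P (i + 1) ⧸ H) = g := hu _ (fun p m => rfl)
  have h3 : QuotientAddGroup.mk' H q = 0 := by rw [h1, ← h2]; rfl
  rwa [QuotientAddGroup.mk'_apply, QuotientAddGroup.eq_zero_iff] at h3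

/-- Induction principle on `P (i+1)` coming from `Pgen`. -/
lemma Pgen_induction
    (tp_universal : ∀ i (A : Type) [AddCommGroup A] (h : P i → M → A),
      (∀ p p' m, h (p + p') m = h p m + h p' m) →
      (∀ p m m', h p (m + m') = h p m + h p m') →
      (∀ (r : R) p m, h (MulOpposite.op r • p) m = h p (r • m)) →
      ∃! g : P (i + 1) →+ A, ∀ p m, g (tp i p m) = h p m)
    (i : ℕ) {C : P (i + 1) → Prop}
    (h0 : C 0) (hadd : ∀ a b, C a → C b → C (a + b)) (hneg : ∀ a, C a → C (-a))
    (hgen : ∀ p m, C (tp i p m)) : ∀ q, C q := by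
  intro q
  refine AddSubgroup.closure_induction (p := fun x _ => C x) ?_ h0
    (fun a b _ _ ha hb => hadd a b ha hb) (fun a _ ha => hneg a ha)
    (Pgen P tp tp_universal i q)
  rintro x ⟨p, m, rfl⟩
  exact hgen p m

/-- Left-iterated pairing `x ⊗ v₀ ⊗ v₁ ⊗ ⋯ ⊗ v_{k-1}`. -/
def iterLeft : ∀ k : ℕ, P 0 → (ℕ → M) → P k
  | 0, p, _ => p
  | k + 1, p, v => tp k (iterLeft k p v) (v k)

lemma iterLeft_congr : ∀ (k : ℕ) (p : P 0) {v v' : ℕ → M},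
    (∀ t, t < k → v t = v' t) → iterLeft P tp k p v = iterLeft P tp k p v'
  | 0, _, _, _, _ => rfl
  | k + 1, p, v, v', h => by
    show tp k _ (v k) = tp k _ (v' k)
    rw [iterLeft_congr k p (fun t ht => h t (Nat.lt_succ_of_lt ht)), h k (Nat.lt_succ_self k)]

lemma iterLeft_update_add
    (tp_add_left : ∀ i p p' m, tp i (p + p') m = tp i p m + tp i p' m)
    (tp_add_right : ∀ i p m m', tp i p (m + m') = tp i p m + tp i p m') :
    ∀ (k : ℕ) (p : P 0) (v : ℕ → M) (i : ℕ), i < k → ∀ (m m' : M),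
    iterLeft P tp k p (Function.update v i (m + m')) =
      iterLeft P tp k p (Function.update v i m) + iterLeft P tp k p (Function.update v i m') := by
  intro k
  induction k with
  | zero => intro p v i hi; omega
  | succ k IH =>
    intro p v i hi m m'
    show tp k _ (Function.update v i (m + m') k) = tp k _ _ + tp k _ _
    by_cases hik : i = k
    · subst hik
      have hc : ∀ x : M, iterLeft P tp i p (Function.update v i x) = iterLeft P tp i p v :=
        fun x => iterLeft_congr P tp i p (fun t ht => Function.update_of_ne (by omega) _ _)
      rw [hc, hc, hc, Function.update_self, Function.update_self, Function.update_self,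
        tp_add_right]
    · have hk : ∀ x : M, Function.update v i x k = v k :=
        fun x => Function.update_of_ne (by omega) _ _
      rw [hk, hk, hk, IH p v i (by omega) m m', tp_add_left]

lemma iterLeft_update_balanced
    (tp_balanced : ∀ i (r : R) p m, tp i (MulOpposite.op r • p) m = tp i p (r • m))
    (tp_smul : ∀ i (r : Rᵐᵒᵖ) p m, tp i p (r • m) = r • tp i p m) :
    ∀ (k : ℕ) (p : P 0) (v : ℕ → M) (i : ℕ), i + 1 < k → ∀ (r : R),
    iterLeft P tp k p (Function.update v i (MulOpposite.op r • v i)) =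
      iterLeft P tp k p (Function.update v (i + 1) (r • v (i + 1))) := by
  intro k
  induction k with
  | zero => intro p v i hi; omega
  | succ k IH =>
    intro p v i hi r
    show tp k _ (Function.update v i _ k) = tp k _ (Function.update v (i+1) _ k)
    by_cases hik : i + 1 = k
    · subst hik
      rw [Function.update_of_ne (by omega), Function.update_self]
      show tp (i+1) (tp i _ (Function.update v i _ i)) (v (i+1)) =
        tp (i+1) (tp i _ (Function.update v (i+1) _ i)) (r • v (i+1))
      have hc1 : iterLeft P tp i p (Function.update v i (MulOpposite.op r • v i)) =
          iterLeft P tp i p v :=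
        iterLeft_congr P tp i p (fun t ht => Function.update_of_ne (by omega) _ _)
      have hc2 : iterLeft P tp i p (Function.update v (i+1) (r • v (i+1))) =
          iterLeft P tp i p v :=
        iterLeft_congr P tp i p (fun t ht => Function.update_of_ne (by omega) _ _)
      rw [hc1, hc2, Function.update_self, Function.update_of_ne (by omega)]
      rw [tp_smul i (MulOpposite.op r) _ (v i), ← tp_balanced (i+1) r]
    · rw [Function.update_of_ne (by omega), Function.update_of_ne (by omega),
        IH p v i (by omega) r]

variable (n : ℕ)

lemma Ptriv
    (hnil : ∀ (A : Type) [AddCommGroup A] (f : (Fin (n + 1) → M) → A),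
      (∀ (v : Fin (n + 1) → M) (i : Fin (n + 1)) (m m' : M),
        f (Function.update v i (m + m')) =
          f (Function.update v i m) + f (Function.update v i m')) →
      (∀ (v : Fin (n + 1) → M) (i : Fin n) (r : R),
        f (Function.update v i.castSucc (MulOpposite.op r • v i.castSucc)) =
          f (Function.update v i.succ (r • v i.succ))) →
      ∀ v, f v = 0)
    (tp_add_left : ∀ i p p' m, tp i (p + p') m = tp i p m + tp i p' m)
    (tp_add_right : ∀ i p m m', tp i p (m + m') = tp i p m + tp i p m')
    (tp_balanced : ∀ i (r : R) p m, tp i (MulOpposite.op r • p) m = tp i p (r • m))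
    (tp_smul : ∀ i (r : Rᵐᵒᵖ) p m, tp i p (r • m) = r • tp i p m)
    (tp_universal : ∀ i (A : Type) [AddCommGroup A] (h : P i → M → A),
      (∀ p p' m, h (p + p') m = h p m + h p' m) →
      (∀ p m m', h p (m + m') = h p m + h p m') →
      (∀ (r : R) p m, h (MulOpposite.op r • p) m = h p (r • m)) →
      ∃! g : P (i + 1) →+ A, ∀ p m, g (tp i p m) = h p m) :
    ∀ q : P (n + 1), q = 0 := by
  classical
  set ext : (Fin (n + 1) → M) → ℕ → M :=
    fun vv t => if h : t < n + 1 then vv ⟨t, h⟩ else 0 with hext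
  have ext_update : ∀ (vv : Fin (n + 1) → M) (i : Fin (n + 1)) (x : M),
      ext (Function.update vv i x) = Function.update (ext vv) i.val x := by
    intro vv i x
    funext t
    by_cases h : t < n + 1
    · simp only [hext, dif_pos h, Function.update_apply, Fin.ext_iff]
    · have ht : t ≠ i.val := by omega
      simp only [hext, dif_neg h, Function.update_of_ne ht]
  have hgen0 : ∀ (p : P 0) (v : ℕ → M), iterLeft P tp (n + 1) p v = 0 := by
    intro p v
    have hmain := hnil (P (n + 1)) (fun vv => iterLeft P tp (n + 1) p (ext vv))
      (by
        intro vv i m m'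
        show iterLeft P tp (n + 1) p (ext (Function.update vv i (m + m')))
          = iterLeft P tp (n + 1) p (ext (Function.update vv i m))
            + iterLeft P tp (n + 1) p (ext (Function.update vv i m'))
        rw [ext_update, ext_update, ext_update]
        exact iterLeft_update_add P tp tp_add_left tp_add_right (n + 1) p (ext vv)
          i.val i.isLt m m')
      (by
        intro vv i r
        show iterLeft P tp (n + 1) p
            (ext (Function.update vv i.castSucc (MulOpposite.op r • vv i.castSucc)))
          = iterLeft P tp (n + 1) p (ext (Function.update vv i.succ (r • vv i.succ)))
        rw [ext_update, ext_update]
        have h1 : vv i.castSucc = ext vv i.castSucc.val := by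
          simp only [hext, dif_pos i.castSucc.isLt]
        have h2 : vv i.succ = ext vv i.succ.val := by
          simp only [hext, dif_pos i.succ.isLt]
        rw [h1, h2]
        exact iterLeft_update_balanced P tp tp_balanced tp_smul (n + 1) p (ext vv)
          i.val (by omega) r)
      (fun j => v j.val)
    have hc : iterLeft P tp (n + 1) p (ext (fun j => v j.val)) = iterLeft P tp (n + 1) p v :=
      iterLeft_congr P tp (n + 1) p (fun t ht => by simp only [hext, dif_pos ht])
    rw [← hc]
    exact hmain
  have hgenAll : ∀ k (q : P k),
      q ∈ AddSubgroup.closure {x : P k | ∃ p v, x = iterLeft P tp k p v} := by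
    intro k
    induction k with
    | zero => exact fun q => AddSubgroup.subset_closure ⟨q, fun _ => 0, rfl⟩
    | succ k IH =>
      refine Pgen_induction P tp tp_universal k (C := fun q => q ∈ _)
        (zero_mem _) (fun a b ha hb => add_mem ha hb) (fun a ha => neg_mem ha) ?_
      intro p m
      refine AddSubgroup.closure_induction
        (p := fun x _ => tp k x m ∈ AddSubgroup.closure
          {x : P (k+1) | ∃ p v, x = iterLeft P tp (k+1) p v}) ?_ ?_ ?_ ?_ (IH p)
      · rintro x ⟨p0, v, rfl⟩
        refine AddSubgroup.subset_closure ⟨p0, Function.update v k m, ?_⟩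
        have h2 : iterLeft P tp k p0 (Function.update v k m) = iterLeft P tp k p0 v :=
          iterLeft_congr P tp k p0 (fun t ht => Function.update_of_ne (Nat.ne_of_lt ht) m v)
        show tp k (iterLeft P tp k p0 v) m
          = tp k (iterLeft P tp k p0 (Function.update v k m)) (Function.update v k m k)
        rw [h2, Function.update_self]
      · show tp k (0 : P k) m ∈ _
        rw [show tp k (0 : P k) m = tpHom P tp tp_add_left k m 0 from rfl, map_zero]
        exact zero_mem _
      · intro a b _ _ ha hb
        show tp k (a + b) m ∈ _
        rw [show tp k (a + b) m = tpHom P tp tp_add_left k m (a + b) from rfl, map_add]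
        exact add_mem ha hb
      · intro a _ ha
        show tp k (-a) m ∈ _
        rw [show tp k (-a) m = tpHom P tp tp_add_left k m (-a) from rfl, map_neg]
        exact neg_mem ha
  intro q
  refine AddSubgroup.closure_induction (p := fun x _ => x = (0 : P (n + 1)))
    ?_ rfl (fun a b _ _ ha hb => by
      show a + b = 0
      rw [show a = 0 from ha, show b = 0 from hb, add_zero])
    (fun a _ ha => by
      show -a = 0
      rw [show a = 0 from ha, neg_zero])
    (hgenAll (n + 1) q)
  rintro x ⟨p, v, rfl⟩
  exact hgen0 p v

variable {X : Type} [AddCommGroup X] [Module Rᵐᵒᵖ X]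

/-- `V k ∘ U k = V (k+1)`. -/
lemma VU_eq
    (e0 : P 0 ≃ₗ[Rᵐᵒᵖ] X) (U : ∀ i, P (i + 1) →ₗ[Rᵐᵒᵖ] P i) (V : ∀ i, P i →ₗ[Rᵐᵒᵖ] X)
    (tp_universal : ∀ i (A : Type) [AddCommGroup A] (h : P i → M → A),
      (∀ p p' m, h (p + p') m = h p m + h p' m) →
      (∀ p m m', h p (m + m') = h p m + h p m') →
      (∀ (r : R) p m, h (MulOpposite.op r • p) m = h p (r • m)) →
      ∃! g : P (i + 1) →+ A, ∀ p m, g (tp i p m) = h p m)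
    (γX : X → M → X)
    (hU0 : ∀ p m, U 0 (tp 0 p m) = e0.symm (γX (e0 p) m))
    (hUsucc : ∀ i p m, U (i + 1) (tp (i + 1) p m) = tp i (U i p) m)
    (hV0 : ∀ p, V 0 p = e0 p)
    (hVsucc : ∀ i p m, V (i + 1) (tp i p m) = γX (V i p) m) :
    ∀ (k : ℕ) (p : P (k + 1)), V k (U k p) = V (k + 1) p := by
  intro k
  induction k with
  | zero =>
    refine Pgen_induction P tp tp_universal 0
      (C := fun p => V 0 (U 0 p) = V 1 p) (by simp) ?_ ?_ ?_
    · intro a b ha hb; rw [map_add, map_add, map_add, ha, hb]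
    · intro a ha; rw [map_neg, map_neg, map_neg, ha]
    · intro p m
      rw [hU0, hV0, LinearEquiv.apply_symm_apply, hVsucc, hV0]
  | succ k IH =>
    refine Pgen_induction P tp tp_universal (k + 1)
      (C := fun p => V (k + 1) (U (k + 1) p) = V (k + 2) p) (by simp) ?_ ?_ ?_
    · intro a b ha hb; rw [map_add, map_add, map_add, ha, hb]
    · intro a ha; rw [map_neg, map_neg, map_neg, ha]
    · intro p m
      rw [hUsucc, hVsucc, hVsucc, IH p]

/-- the canonical preimage family for surjectivity onto the kernel. -/
def zfun (U : ∀ i, P (i + 1) →ₗ[Rᵐᵒᵖ] P i) (w : ∀ j : Fin (n + 1), P j.val) (j : ℕ) :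
    P (j + 1) :=
  if h : j < n then U (j + 1) (zfun U w (j + 1)) + w ⟨j + 1, by omega⟩ else 0
termination_by n - j

lemma zfun_top (U : ∀ i, P (i + 1) →ₗ[Rᵐᵒᵖ] P i) (w : ∀ j : Fin (n + 1), P j.val) (j : ℕ)
    (h : ¬ j < n) : zfun P n U w j = 0 := by
  rw [zfun, dif_neg h]

lemma zfun_step (U : ∀ i, P (i + 1) →ₗ[Rᵐᵒᵖ] P i) (w : ∀ j : Fin (n + 1), P j.val) (j : ℕ)
    (h : j < n) :
    zfun P n U w j = U (j + 1) (zfun P n U w (j + 1)) + w ⟨j + 1, by omega⟩ := by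
  rw [zfun, dif_pos h]

end AuxSES


/-! **Statement 17.** Let `R` be a ring and `M` a nilpotent `R`-`R`-bimodule
(`M^{⊗(n+1)} = 0`).  For every module `(X, u)` over the tensor ring
`T_R(M) = ⊕_{i≥0} M^{⊗i}` there is a short exact sequence of `T_R(M)`-modules
`0 → (Ind(X⊗_R M), c_{X⊗M}) → (Ind(X), c_X) → (X, u) → 0`,
where the surjection restricted to `X⊗M^{⊗i}` is `u` composed `i` times.

Right modules are `Rᵐᵒᵖ`-modules.  The iterated tensor products `X ⊗ M^{⊗i}`
are given by a tower of realizations `P i` with universal balanced pairings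
`tp i`, `P 0 ≅ X`; the module structure `u` is a balanced pairing `γX`; the
maps `u ⊗ M^{⊗i} : P (i+1) → P i` form the family `U`, and the iterates of `u`
form the family `V : P i → X`.  `Ind(X⊗M)` uses the shifted tower `P (i+1)`;
the injection sends a family `(z_i)` to `(z_{j-1} − U(z_j))_j`, and the
surjection is `(w_j) ↦ Σ_j V(w_j)`. -/

noncomputable section

variable (R M : Type) [Ring R] [AddCommGroup M] [Module R M] [Module Rᵐᵒᵖ M]
  [SMulCommClass R Rᵐᵒᵖ M] (n : ℕ)
  (X : Type) [AddCommGroup X] [Module Rᵐᵒᵖ X]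
  (P : ℕ → Type) [∀ i, AddCommGroup (P i)] [∀ i, Module Rᵐᵒᵖ (P i)]
  (e0 : P 0 ≃ₗ[Rᵐᵒᵖ] X)
  (tp : ∀ i, P i → M → P (i + 1))
  (U : ∀ i, P (i + 1) →ₗ[Rᵐᵒᵖ] P i)
  (V : ∀ i, P i →ₗ[Rᵐᵒᵖ] X)

/-- `Ind(X) = ⊕_{i=0}^n X ⊗ M^{⊗i}`. -/
abbrev IndX : Type := (j : Fin (n + 1)) → P j.val

/-- `Ind(X⊗M) = ⊕_{i=0}^n (X⊗M) ⊗ M^{⊗i}`, via the shifted tower. -/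
abbrev IndXM : Type := (j : Fin (n + 1)) → P (j.val + 1)

/-- The structure map `c_X` of `Ind(X)`, as a pairing. -/
def cX : IndX n P → M → IndX n P := fun w m j =>
  match j with
  | ⟨0, _⟩ => 0
  | ⟨k + 1, hk⟩ => tp k (w ⟨k, Nat.lt_of_succ_lt hk⟩) m

/-- The structure map `c_{X⊗M}` of `Ind(X⊗M)`, as a pairing. -/
def cXM : IndXM n P → M → IndXM n P := fun w m j =>
  match j with
  | ⟨0, _⟩ => 0
  | ⟨k + 1, hk⟩ => tp (k + 1) (w ⟨k, Nat.lt_of_succ_lt hk⟩) m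

/-- The injection `Ind(X⊗M) → Ind(X)`, `(z_i) ↦ (z_{j-1} − U(z_j))_j`. -/
def psi : IndXM n P → IndX n P := fun w j =>
  (match j with
    | ⟨0, _⟩ => 0
    | ⟨k + 1, hk⟩ => w ⟨k, Nat.lt_of_succ_lt hk⟩) - U j.val (w j)

/-- The surjection `Ind(X) → X`, `(w_j) ↦ Σ_j V(w_j)` (iterated `u`). -/
def phi : IndX n P → X := fun w => ∑ j : Fin (n + 1), V j.val (w j)


theorem tensorRing_canonical_ses
    -- `M` is nilpotent: `M^{⊗(n+1)} = 0`
    (hnil : ∀ (A : Type) [AddCommGroup A] (f : (Fin (n + 1) → M) → A),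
      (∀ (v : Fin (n + 1) → M) (i : Fin (n + 1)) (m m' : M),
        f (Function.update v i (m + m')) =
          f (Function.update v i m) + f (Function.update v i m')) →
      (∀ (v : Fin (n + 1) → M) (i : Fin n) (r : R),
        f (Function.update v i.castSucc (MulOpposite.op r • v i.castSucc)) =
          f (Function.update v i.succ (r • v i.succ))) →
      ∀ v, f v = 0)
    -- the `tp i` are balanced bi-additive universal pairings:
    (tp_add_left : ∀ i p p' m, tp i (p + p') m = tp i p m + tp i p' m)
    (tp_add_right : ∀ i p m m', tp i p (m + m') = tp i p m + tp i p m')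
    (tp_balanced : ∀ i (r : R) p m,
      tp i (MulOpposite.op r • p) m = tp i p (r • m))
    (tp_smul : ∀ i (r : Rᵐᵒᵖ) p m, tp i p (r • m) = r • tp i p m)
    (tp_universal : ∀ i (A : Type) [AddCommGroup A] (h : P i → M → A),
      (∀ p p' m, h (p + p') m = h p m + h p' m) →
      (∀ p m m', h p (m + m') = h p m + h p m') →
      (∀ (r : R) p m, h (MulOpposite.op r • p) m = h p (r • m)) →
      ∃! g : P (i + 1) →+ A, ∀ p m, g (tp i p m) = h p m)
    -- the `T_R(M)`-module `(X, u)`, as a balanced pairing `γX`: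
    (γX : X → M → X)
    (γX_add_left : ∀ x x' m, γX (x + x') m = γX x m + γX x' m)
    (γX_add_right : ∀ x m m', γX x (m + m') = γX x m + γX x m')
    (γX_balanced : ∀ (r : R) x m, γX (MulOpposite.op r • x) m = γX x (r • m))
    (γX_smul : ∀ (r : Rᵐᵒᵖ) x m, γX x (r • m) = r • γX x m)
    -- `U i = u ⊗ M^{⊗i}` and `V i = u` iterated `i` times:
    (hU0 : ∀ p m, U 0 (tp 0 p m) = e0.symm (γX (e0 p) m))
    (hUsucc : ∀ i p m, U (i + 1) (tp (i + 1) p m) = tp i (U i p) m)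
    (hV0 : ∀ p, V 0 p = e0 p)
    (hVsucc : ∀ i p m, V (i + 1) (tp i p m) = γX (V i p) m) :
    -- `ψ` and `φ` are morphisms of `T_R(M)`-modules ...
    (∀ w m, psi R n P U (cXM M n P tp w m) = cX M n P tp (psi R n P U w) m) ∧
    (∀ w m, phi R n X P V (cX M n P tp w m) = γX (phi R n X P V w) m) ∧
    (∀ w w', psi R n P U (w + w') = psi R n P U w + psi R n P U w') ∧
    (∀ (r : Rᵐᵒᵖ) w, psi R n P U (r • w) = r • psi R n P U w) ∧
    (∀ w w', phi R n X P V (w + w') = phi R n X P V w + phi R n X P V w') ∧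
    (∀ (r : Rᵐᵒᵖ) w, phi R n X P V (r • w) = r • phi R n X P V w) ∧
    -- ... and they form a short exact sequence:
    Function.Injective (psi R n P U) ∧
    Function.Surjective (phi R n X P V) ∧
    (∀ w, phi R n X P V w = 0 ↔ ∃ z, psi R n P U z = w) := by
  classical
  have Pzero : ∀ q : P (n + 1), q = 0 :=
    Ptriv P tp n hnil tp_add_left tp_add_right tp_balanced tp_smul tp_universal
  have hVU : ∀ (k : ℕ) (p : P (k + 1)), V k (U k p) = V (k + 1) p :=
    VU_eq P tp e0 U V tp_universal γX hU0 hUsucc hV0 hVsucc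
  have tp_sub : ∀ i (a b : P i) m, tp i (a - b) m = tp i a m - tp i b m :=
    fun i a b m => map_sub (tpHom P tp tp_add_left i m) a b
  have tp_zero : ∀ i m, tp i (0 : P i) m = 0 :=
    fun i m => map_zero (tpHom P tp tp_add_left i m)
  -- additivity of `ψ`
  have hpsi_add : ∀ w w', psi R n P U (w + w') = psi R n P U w + psi R n P U w' := by
    intro w w'
    funext j
    obtain ⟨v, hv⟩ := j
    cases v with
    | zero =>
      show (0 : P 0) - U 0 (w ⟨0, hv⟩ + w' ⟨0, hv⟩)
        = ((0 : P 0) - U 0 (w ⟨0, hv⟩)) + ((0 : P 0) - U 0 (w' ⟨0, hv⟩))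
      rw [map_add]; abel
    | succ k =>
      show (w ⟨k, Nat.lt_of_succ_lt hv⟩ + w' ⟨k, Nat.lt_of_succ_lt hv⟩)
          - U (k + 1) (w ⟨k + 1, hv⟩ + w' ⟨k + 1, hv⟩)
        = (w ⟨k, Nat.lt_of_succ_lt hv⟩ - U (k + 1) (w ⟨k + 1, hv⟩))
          + (w' ⟨k, Nat.lt_of_succ_lt hv⟩ - U (k + 1) (w' ⟨k + 1, hv⟩))
      rw [map_add]; abel
  -- kernel of `ψ` is trivial
  have hker : ∀ z : IndXM n P, psi R n P U z = 0 → ∀ j, z j = 0 := by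
    intro z hz j
    induction j using Fin.reverseInduction with
    | last => exact Pzero (z (Fin.last n))
    | cast i IH =>
      have h2 : z ⟨i.val, Nat.lt_succ_of_lt i.isLt⟩ - U (i.val + 1) (z i.succ) = 0 :=
        congrFun hz i.succ
      rw [IH, map_zero, sub_zero] at h2
      exact h2
  -- `φ ∘ ψ = 0`
  have hphipsi : ∀ z : IndXM n P, phi R n X P V (psi R n P U z) = 0 := by
    intro z
    have hterm : ∀ j : Fin (n + 1), V j.val (psi R n P U z j)
        = (Fin.cases (motive := fun _ => X) 0
            (fun i : Fin n => V (i.val + 1) (z ⟨i.val, Nat.lt_succ_of_lt i.isLt⟩)) j)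
          - V (j.val + 1) (z j) := by
      intro j
      induction j using Fin.cases with
      | zero =>
        show V 0 ((0 : P 0) - U 0 (z 0)) = (0 : X) - V 1 (z 0)
        rw [map_sub, map_zero, hVU 0 (z 0)]
      | succ i =>
        show V (i.val + 1) (z ⟨i.val, Nat.lt_succ_of_lt i.isLt⟩ - U (i.val + 1) (z i.succ))
          = V (i.val + 1) (z ⟨i.val, Nat.lt_succ_of_lt i.isLt⟩) - V (i.val + 2) (z i.succ)
        rw [map_sub, hVU (i.val + 1) (z i.succ)]
    show ∑ j : Fin (n + 1), V j.val (psi R n P U z j) = 0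
    rw [Finset.sum_congr rfl (fun j _ => hterm j), Finset.sum_sub_distrib]
    rw [Fin.sum_univ_succ (f := fun j : Fin (n + 1) =>
      (Fin.cases (motive := fun _ => X) 0
        (fun i : Fin n => V (i.val + 1) (z ⟨i.val, Nat.lt_succ_of_lt i.isLt⟩)) j))]
    rw [Fin.sum_univ_castSucc (f := fun j : Fin (n + 1) => V (j.val + 1) (z j))]
    have hsum1 : (∑ i : Fin n, Fin.cases (motive := fun _ => X) 0
          (fun i : Fin n => V (i.val + 1) (z ⟨i.val, Nat.lt_succ_of_lt i.isLt⟩)) i.succ)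
        = ∑ i : Fin n, V (i.val + 1) (z ⟨i.val, Nat.lt_succ_of_lt i.isLt⟩) :=
      Finset.sum_congr rfl (fun i _ => by rw [Fin.cases_succ])
    have hsum2 : (∑ i : Fin n, V (i.castSucc.val + 1) (z i.castSucc))
        = ∑ i : Fin n, V (i.val + 1) (z ⟨i.val, Nat.lt_succ_of_lt i.isLt⟩) :=
      Finset.sum_congr rfl (fun i _ => rfl)
    rw [Fin.cases_zero, zero_add, hsum1, hsum2, Pzero (z (Fin.last n)), map_zero, add_zero]
    exact sub_self _
  -- splitting off one term of a truncated sum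
  have hsplit : ∀ (a : Fin (n + 1) → X) (j : Fin (n + 1)),
      (∑ k : Fin (n + 1), if j.val + 1 ≤ k.val then a k else 0) + a j
        = ∑ k : Fin (n + 1), if j.val ≤ k.val then a k else 0 := by
    intro a j
    have hpt : ∀ k : Fin (n + 1), (if j.val ≤ k.val then a k else 0)
        = (if j.val + 1 ≤ k.val then a k else 0) + (if k = j then a k else 0) := by
      intro k
      by_cases h1 : j.val + 1 ≤ k.val
      · rw [if_pos h1, if_pos (by omega),
          if_neg (by intro he; rw [he] at h1; omega), add_zero]
      · by_cases h2 : k = j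
        · subst h2; rw [if_pos (le_refl _), if_neg h1, if_pos rfl, zero_add]
        · have hne : k.val ≠ j.val := fun hh => h2 (Fin.ext hh)
          rw [if_neg (by omega), if_neg h1, if_neg h2, add_zero]
    rw [show (∑ k : Fin (n + 1), if j.val ≤ k.val then a k else 0)
        = ∑ k : Fin (n + 1), ((if j.val + 1 ≤ k.val then a k else 0)
            + (if k = j then a k else 0)) from Finset.sum_congr rfl (fun k _ => hpt k),
      Finset.sum_add_distrib, Finset.sum_ite_eq' Finset.univ j a,
      if_pos (Finset.mem_univ j)]
  refine ⟨?_, ?_, hpsi_add, ?_, ?_, ?_, ?_, ?_, ?_⟩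
  · -- ψ is a morphism
    intro w m
    funext j
    obtain ⟨v, hv⟩ := j
    cases v with
    | zero =>
      show (0 : P 0) - U 0 (0 : P (0 + 1)) = (0 : P 0)
      rw [map_zero, sub_zero]
    | succ k =>
      cases k with
      | zero =>
        show (0 : P 1) - U 1 (tp (0 + 1) (w ⟨0, Nat.lt_of_succ_lt hv⟩) m)
          = tp 0 ((0 : P 0) - U 0 (w ⟨0, Nat.lt_of_succ_lt hv⟩)) m
        rw [hUsucc 0, tp_sub, tp_zero]
      | succ k' =>
        show tp (k' + 1) (w ⟨k', by omega⟩) m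
            - U (k' + 2) (tp (k' + 2) (w ⟨k' + 1, Nat.lt_of_succ_lt hv⟩) m)
          = tp (k' + 1) (w ⟨k', by omega⟩ - U (k' + 1) (w ⟨k' + 1, Nat.lt_of_succ_lt hv⟩)) m
        rw [hUsucc (k' + 1), tp_sub]
  · -- φ is a morphism
    intro w m
    have hγ : ∀ x x' : X, γX (x + x') m = γX x m + γX x' m := fun x x' => γX_add_left x x' m
    let γHom : X →+ X := AddMonoidHom.mk' (fun x => γX x m) hγ
    show ∑ j : Fin (n + 1), V j.val (cX M n P tp w m j)
      = γHom (∑ j : Fin (n + 1), V j.val (w j))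
    rw [map_sum]
    rw [Fin.sum_univ_succ (f := fun j : Fin (n + 1) => V j.val (cX M n P tp w m j))]
    rw [Fin.sum_univ_castSucc (f := fun j : Fin (n + 1) => γHom (V j.val (w j)))]
    have h0 : V (0 : Fin (n + 1)).val (cX M n P tp w m 0) = 0 := by
      show V 0 (0 : P 0) = 0; rw [map_zero]
    have hlast : γHom (V (Fin.last n).val (w (Fin.last n))) = 0 := by
      show γX (V n (w (Fin.last n))) m = 0
      rw [← hVsucc n (w (Fin.last n)) m, Pzero (tp n (w (Fin.last n)) m), map_zero]
    rw [h0, zero_add, hlast, add_zero]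
    refine Finset.sum_congr rfl (fun i _ => ?_)
    show V (i.val + 1) (tp i.val (w ⟨i.val, Nat.lt_succ_of_lt i.isLt⟩) m)
      = γHom (V i.castSucc.val (w i.castSucc))
    rw [hVsucc]
    rfl
  · -- ψ is `Rᵐᵒᵖ`-linear
    intro r w
    funext j
    obtain ⟨v, hv⟩ := j
    cases v with
    | zero =>
      show (0 : P 0) - U 0 (r • w ⟨0, hv⟩) = r • ((0 : P 0) - U 0 (w ⟨0, hv⟩))
      rw [map_smul, smul_sub, smul_zero]
    | succ k =>
      show r • w ⟨k, Nat.lt_of_succ_lt hv⟩ - U (k + 1) (r • w ⟨k + 1, hv⟩)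
        = r • (w ⟨k, Nat.lt_of_succ_lt hv⟩ - U (k + 1) (w ⟨k + 1, hv⟩))
      rw [map_smul, smul_sub]
  · -- φ is additive
    intro w w'
    show ∑ j : Fin (n + 1), V j.val (w j + w' j)
      = (∑ j : Fin (n + 1), V j.val (w j)) + ∑ j : Fin (n + 1), V j.val (w' j)
    rw [← Finset.sum_add_distrib]
    exact Finset.sum_congr rfl (fun j _ => map_add _ _ _)
  · -- φ is `Rᵐᵒᵖ`-linear
    intro r w
    show ∑ j : Fin (n + 1), V j.val (r • w j) = r • ∑ j : Fin (n + 1), V j.val (w j)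
    rw [Finset.smul_sum]
    exact Finset.sum_congr rfl (fun j _ => map_smul _ _ _)
  · -- ψ is injective
    let Ψ : IndXM n P →+ IndX n P := AddMonoidHom.mk' (psi R n P U) hpsi_add
    exact (injective_iff_map_eq_zero Ψ).mpr (fun z hz => funext (hker z hz))
  · -- φ is surjective
    intro x
    set s : IndX n P := Pi.single (0 : Fin (n + 1)) (e0.symm x) with hs
    refine ⟨s, ?_⟩
    show ∑ j : Fin (n + 1), V j.val (s j) = x
    rw [Fin.sum_univ_succ (f := fun j : Fin (n + 1) => V j.val (s j))]
    have h1 : ∀ i : Fin n, V i.succ.val (s i.succ) = 0 := by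
      intro i
      have hz : s i.succ = 0 := Pi.single_eq_of_ne (Fin.succ_ne_zero i) _
      rw [hz, map_zero]
    have h0 : s 0 = e0.symm x := by rw [hs]; exact Pi.single_eq_same _ _
    rw [Finset.sum_congr rfl (fun i _ => h1 i), Finset.sum_const_zero, add_zero, h0,
      show V (0 : Fin (n + 1)).val (e0.symm x) = e0 (e0.symm x) from hV0 _,
      LinearEquiv.apply_symm_apply]
  · -- exactness
    intro w
    constructor
    · intro hw
      have Qlem : ∀ j : Fin (n + 1), V (j.val + 1) (zfun P n U w j.val)
          = ∑ k : Fin (n + 1), if j.val + 1 ≤ k.val then V k.val (w k) else 0 := by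
        intro j
        induction j using Fin.reverseInduction with
        | last =>
          show V ((Fin.last n).val + 1) (zfun P n U w (Fin.last n).val) = _
          simp only [Fin.val_last]
          rw [zfun_top P n U w n (lt_irrefl n), map_zero]
          symm
          refine Finset.sum_eq_zero (fun k _ => if_neg ?_)
          have := k.isLt
          omega
        | cast i IH =>
          show V (i.val + 1) (zfun P n U w i.val) = _
          rw [zfun_step P n U w i.val i.isLt, map_add, hVU (i.val + 1),
            show V (i.val + 1 + 1) (zfun P n U w (i.val + 1))
              = ∑ k : Fin (n + 1), if i.val + 1 + 1 ≤ k.val then V k.val (w k) else 0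
              from IH]
          exact hsplit (fun k => V k.val (w k)) i.succ
      refine ⟨fun j => zfun P n U w j.val, ?_⟩
      funext j
      obtain ⟨v, hv⟩ := j
      cases v with
      | succ k =>
        show zfun P n U w k - U (k + 1) (zfun P n U w (k + 1)) = w ⟨k + 1, hv⟩
        rw [zfun_step P n U w k (by omega), add_sub_cancel_left]
      | zero =>
        show (0 : P 0) - U 0 (zfun P n U w 0) = w ⟨0, hv⟩
        have h1 : V 1 (zfun P n U w 0) + V 0 (w ⟨0, hv⟩) = 0 := by
          have hq : V 1 (zfun P n U w 0)
              = ∑ k : Fin (n + 1), if 1 ≤ k.val then V k.val (w k) else 0 := Qlem ⟨0, hv⟩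
          have hs := hsplit (fun k => V k.val (w k)) ⟨0, hv⟩
          have hall : (∑ k : Fin (n + 1), if (0 : ℕ) ≤ k.val then V k.val (w k) else 0)
              = ∑ k : Fin (n + 1), V k.val (w k) :=
            Finset.sum_congr rfl (fun k _ => if_pos (Nat.zero_le _))
          rw [hq]
          calc (∑ k : Fin (n + 1), if 1 ≤ k.val then V k.val (w k) else 0) + V 0 (w ⟨0, hv⟩)
              = ∑ k : Fin (n + 1), V k.val (w k) := by rw [← hall]; exact hs
            _ = 0 := hw
        apply e0.injective
        rw [map_sub, map_zero, zero_sub,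
          show (e0 (U 0 (zfun P n U w 0)) : X) = V 1 (zfun P n U w 0) from by
            rw [← hV0, hVU 0],
          show (e0 (w ⟨0, hv⟩) : X) = V 0 (w ⟨0, hv⟩) from (hV0 _).symm]
        exact neg_eq_of_add_eq_zero_right h1
    · rintro ⟨z, rfl⟩
      exact hphipsi z


end
end
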